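/- If X is an Ahlfors δ-regular metric space (i.e., there is an Ahlfors δ-regular measure with support equal to X), then the restriction of the δ-dimensional Hausdorff measure H^δ to X is itself Ahlfors δ-regular: there are constants 0 < c₁' ≤ c₂' < ∞ and r₀ > 0 such that c₁' r^δ ≤ H^δ(B(x,r) ∩ X) ≤ c₂' r^δ for all x ∈ X and r ≤ r₀. -/

import Mathlib

open MeasureTheory Filter Set
open scoped ENNReal NNReal
open scoped Topology

/-- A measure with a uniform upper mass bound on small balls has no atoms. -/
private lemma aux_singleton_zero {X : Type*} [MetricSpace X] [MeasurableSpace X]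
    (μ : Measure X) (c₂ r₀ δ : ℝ) (hr₀ : 0 < r₀) (hδ : 0 < δ)
    (h : ∀ x : X, ∀ r : ℝ, 0 < r → r ≤ r₀ → μ (Metric.ball x r) ≤ ENNReal.ofReal (c₂ * r ^ δ))
    (y : X) : μ {y} = 0 := by
  have hlim : Tendsto (fun t : ℝ => ENNReal.ofReal (c₂ * t ^ δ)) (𝓝[>] 0) (𝓝 0) := by
    have h1 : Tendsto (fun t : ℝ => c₂ * t ^ δ) (𝓝 0) (𝓝 0) := by
      have h2 := (Real.continuousAt_rpow_const 0 δ (Or.inr hδ.le)).tendsto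
      rw [Real.zero_rpow hδ.ne'] at h2
      simpa using h2.const_mul c₂
    have h3 : Tendsto (fun t : ℝ => ENNReal.ofReal (c₂ * t ^ δ)) (𝓝 0) (𝓝 (ENNReal.ofReal 0)) :=
      (ENNReal.continuous_ofReal.tendsto 0).comp h1
    rw [ENNReal.ofReal_zero] at h3
    exact h3.mono_left nhdsWithin_le_nhds
  have hev : ∀ᶠ t in 𝓝[>] (0 : ℝ), μ {y} ≤ ENNReal.ofReal (c₂ * t ^ δ) := by
    filter_upwards [Ioc_mem_nhdsGT hr₀] with t ht
    exact le_trans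
      (measure_mono (Set.singleton_subset_iff.mpr (Metric.mem_ball_self ht.1)))
      (h y t ht.1 ht.2)
  exact le_zero_iff.mp (ge_of_tendsto hlim hev)

/-- If `X` is an Ahlfors `δ`-regular metric space (some measure of full support is Ahlfors
`δ`-regular), then the `δ`-dimensional Hausdorff measure on `X` is itself Ahlfors
`δ`-regular. -/
theorem stmt5 {X : Type*} [MetricSpace X] [MeasurableSpace X] [BorelSpace X]
    (δ : ℝ) (hδ : 0 < δ)
    (hX : ∃ (μ : Measure X) (c₁ c₂ r₀ : ℝ), 0 < c₁ ∧ c₁ < 1 ∧ 1 < c₂ ∧ 0 < r₀ ∧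
      (∀ x : X, ∀ r : ℝ, 0 < r → 0 < μ (Metric.ball x r)) ∧
      (∀ x : X, ∀ r : ℝ, 0 < r → r ≤ r₀ →
        ENNReal.ofReal (c₁ * r ^ δ) ≤ μ (Metric.ball x r) ∧
          μ (Metric.ball x r) ≤ ENNReal.ofReal (c₂ * r ^ δ))) :
    ∃ c₁' c₂' r₀' : ℝ, 0 < c₁' ∧ c₁' ≤ c₂' ∧ 0 < r₀' ∧
      ∀ x : X, ∀ r : ℝ, 0 < r → r ≤ r₀' →
        ENNReal.ofReal (c₁' * r ^ δ) ≤ μH[δ] (Metric.ball x r) ∧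
          μH[δ] (Metric.ball x r) ≤ ENNReal.ofReal (c₂' * r ^ δ) := by
  obtain ⟨μ, c₁, c₂, r₀, hc₁, hc₁1, hc₂, hr₀, -, hreg⟩ := hX
  have hlow : ∀ x : X, ∀ r : ℝ, 0 < r → r ≤ r₀ →
      ENNReal.ofReal (c₁ * r ^ δ) ≤ μ (Metric.ball x r) := fun x r h1 h2 => (hreg x r h1 h2).1
  have hupp : ∀ x : X, ∀ r : ℝ, 0 < r → r ≤ r₀ →
      μ (Metric.ball x r) ≤ ENNReal.ofReal (c₂ * r ^ δ) := fun x r h1 h2 => (hreg x r h1 h2).2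
  have h2δ : (0 : ℝ) < 2 ^ δ := Real.rpow_pos_of_pos two_pos δ
  have h1le2δ : (1 : ℝ) ≤ 2 ^ δ := Real.one_le_rpow one_le_two hδ.le
  have h8δ : (0 : ℝ) < 8 ^ δ := Real.rpow_pos_of_pos (by norm_num) δ
  have h1le8δ : (1 : ℝ) ≤ 8 ^ δ := Real.one_le_rpow (by norm_num) hδ.le
  have h4δ : (0 : ℝ) < 4 ^ δ := Real.rpow_pos_of_pos (by norm_num) δ
  have hc₂0 : (0 : ℝ) < c₂ := lt_trans one_pos hc₂
  -- the constant controlling the lower bound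
  set k : ℝ≥0∞ := ENNReal.ofReal (c₂ * 2 ^ δ) with hk
  have hk0 : k ≠ 0 := (ENNReal.ofReal_pos.mpr (by positivity)).ne'
  have hktop : k ≠ ∞ := ENNReal.ofReal_ne_top
  -- the comparison measure is below the Hausdorff measure
  have hν : k⁻¹ • μ ≤ μH[δ] := by
    refine Measure.le_hausdorffMeasure δ _ (ENNReal.ofReal (r₀ / 2))
      (ENNReal.ofReal_pos.mpr (by positivity)) ?_
    intro s hs
    rcases s.eq_empty_or_nonempty with rfl | ⟨y, hy⟩
    · simp
    rcases (zero_le : (0 : ℝ≥0∞) ≤ EMetric.diam s).eq_or_lt with hD0 | hDpos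
    · have hsub : s ⊆ {y} := fun z hz => (EMetric.diam_eq_zero_iff.mp hD0.symm) hz hy
      have hμs : μ s = 0 :=
        measure_mono_null hsub (aux_singleton_zero μ c₂ r₀ δ hr₀ hδ hupp y)
      simp [Measure.smul_apply, hμs]
    · set D := EMetric.diam s with hD
      have hDne : D ≠ ∞ := ne_top_of_le_ne_top ENNReal.ofReal_ne_top hs
      have hDt : 0 < D.toReal := ENNReal.toReal_pos hDpos.ne' hDne
      have hDle : D.toReal ≤ r₀ / 2 := by
        have h1 := ENNReal.toReal_mono ENNReal.ofReal_ne_top hs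
        rwa [ENNReal.toReal_ofReal (by positivity)] at h1
      have hsub : s ⊆ Metric.ball y (2 * D.toReal) := by
        intro z hz
        have h1 : edist z y ≤ D := EMetric.edist_le_diam_of_mem hz hy
        have h2 : dist z y ≤ D.toReal := by
          rw [edist_dist] at h1
          exact (ENNReal.ofReal_le_iff_le_toReal hDne).mp h1
        exact Metric.mem_ball.mpr (lt_of_le_of_lt h2 (by linarith))
      have hμs : μ s ≤ k * D ^ δ := by
        have h1 : μ s ≤ ENNReal.ofReal (c₂ * (2 * D.toReal) ^ δ) :=
          le_trans (measure_mono hsub) (hupp y _ (by positivity) (by linarith))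
        have hrw : c₂ * (2 * D.toReal) ^ δ = c₂ * 2 ^ δ * D.toReal ^ δ := by
          rw [Real.mul_rpow (by norm_num) hDt.le]; ring
        have hDrpow : ENNReal.ofReal (D.toReal ^ δ) = D ^ δ := by
          rw [← ENNReal.ofReal_rpow_of_pos hDt, ENNReal.ofReal_toReal hDne]
        calc μ s ≤ ENNReal.ofReal (c₂ * (2 * D.toReal) ^ δ) := h1
          _ = k * D ^ δ := by
              rw [hrw, ENNReal.ofReal_mul (by positivity), hDrpow]
      calc (k⁻¹ • μ) s = k⁻¹ * μ s := by simp [Measure.smul_apply, smul_eq_mul]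
        _ ≤ k⁻¹ * (k * D ^ δ) := by gcongr
        _ = D ^ δ := by rw [← mul_assoc, ENNReal.inv_mul_cancel hk0 hktop, one_mul]
  refine ⟨c₁ / (c₂ * 2 ^ δ), c₂ * 8 ^ δ / c₁, r₀ / 2, by positivity, ?_, by positivity, ?_⟩
  · -- c₁' ≤ c₂'
    have h1 : c₁ / (c₂ * 2 ^ δ) ≤ c₁ := by
      apply div_le_self hc₁.le
      nlinarith
    have h2 : c₂ ≤ c₂ * 8 ^ δ / c₁ := by
      rw [le_div_iff₀ hc₁]
      nlinarith
    nlinarith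
  intro x r hr hrr₀
  constructor
  · -- lower bound
    have h1 : ENNReal.ofReal (c₁ * r ^ δ) ≤ μ (Metric.ball x r) :=
      hlow x r hr (by linarith)
    have h2 : ENNReal.ofReal (c₁ * r ^ δ) =
        k * ENNReal.ofReal (c₁ / (c₂ * 2 ^ δ) * r ^ δ) := by
      rw [hk, ← ENNReal.ofReal_mul (by positivity)]
      congr 1
      field_simp
    calc ENNReal.ofReal (c₁ / (c₂ * 2 ^ δ) * r ^ δ)
        = k⁻¹ * ENNReal.ofReal (c₁ * r ^ δ) := by
          rw [h2, ← mul_assoc, ENNReal.inv_mul_cancel hk0 hktop, one_mul]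
      _ ≤ k⁻¹ * μ (Metric.ball x r) := by gcongr
      _ = (k⁻¹ • μ) (Metric.ball x r) := by simp [Measure.smul_apply, smul_eq_mul]
      _ ≤ μH[δ] (Metric.ball x r) := hν _
  · -- upper bound
    rw [Measure.hausdorffMeasure_apply]
    refine iSup₂_le fun ρ hρ => ?_
    obtain ⟨ε, hε0, hεr, hερ⟩ : ∃ ε : ℝ, 0 < ε ∧ ε ≤ r ∧ ENNReal.ofReal ε ≤ ρ := by
      rcases eq_or_ne ρ ∞ with rfl | hρtop
      · exact ⟨r, hr, le_rfl, le_top⟩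
      · refine ⟨min r ρ.toReal, lt_min hr (ENNReal.toReal_pos hρ.ne' hρtop),
          min_le_left _ _, ?_⟩
        calc ENNReal.ofReal (min r ρ.toReal) ≤ ENNReal.ofReal ρ.toReal :=
              ENNReal.ofReal_le_ofReal (min_le_right _ _)
          _ = ρ := ENNReal.ofReal_toReal hρtop
    -- a maximal (ε/2)-separated subset of the ball
    set S : Set (Set X) :=
      {T | T ⊆ Metric.ball x r ∧ T.Pairwise fun a b => ε / 2 ≤ dist a b} with hS
    have hzorn : ∀ c ⊆ S, IsChain (· ⊆ ·) c → ∃ ub ∈ S, ∀ s ∈ c, s ⊆ ub := by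
      intro c hcS hchain
      refine ⟨⋃₀ c, ⟨sUnion_subset fun s hs => (hcS hs).1, ?_⟩,
        fun s hs => subset_sUnion_of_mem hs⟩
      rintro a ⟨s, hsc, has⟩ b ⟨s', hs'c, hbs'⟩ hab
      rcases hchain.total hsc hs'c with h | h
      · exact (hcS hs'c).2 (h has) hbs' hab
      · exact (hcS hsc).2 has (h hbs') hab
    obtain ⟨T, hTmax⟩ := zorn_subset S hzorn
    have hTsub : T ⊆ Metric.ball x r := hTmax.prop.1
    have hTsep : T.Pairwise fun a b => ε / 2 ≤ dist a b := hTmax.prop.2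
    have hsymm : Symmetric fun a b : X => ε / 2 ≤ dist a b := fun a b h => by
      dsimp only at h ⊢; rwa [dist_comm]
    -- maximality gives a covering property
    have hcov : ∀ y ∈ Metric.ball x r, ∃ t₀ ∈ T, dist y t₀ < ε / 2 := by
      intro y hy
      by_contra hcon
      push_neg at hcon
      have hyT : y ∉ T := fun hyT => by
        have := hcon y hyT
        rw [dist_self] at this
        linarith
      have hins : insert y T ∈ S := by
        refine ⟨insert_subset hy hTsub, ?_⟩
        rw [Set.pairwise_insert]
        exact ⟨hTsep, fun b hb _ => ⟨hcon b hb, hsymm (hcon b hb)⟩⟩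
      exact hyT (hTmax.2 hins (subset_insert y T) (mem_insert y T))
    -- the quarter balls around T are disjoint
    have hdisj : T.PairwiseDisjoint fun t₀ => Metric.ball t₀ (ε / 4) := by
      intro a ha b hb hab
      exact Metric.ball_disjoint_ball (by linarith [hTsep ha hb hab])
    have hq : ∀ t₀ : X, ENNReal.ofReal (c₁ * (ε / 4) ^ δ) ≤ μ (Metric.ball t₀ (ε / 4)) :=
      fun t₀ => hlow t₀ (ε / 4) (by positivity) (by linarith)
    have hballs_subset : ∀ t₀ ∈ T, Metric.ball t₀ (ε / 4) ⊆ Metric.ball x (2 * r) := by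
      intro t₀ ht₀ z hz
      have h1 : dist t₀ x < r := Metric.mem_ball.mp (hTsub ht₀)
      have h2 : dist z t₀ < ε / 4 := Metric.mem_ball.mp hz
      refine Metric.mem_ball.mpr ?_
      calc dist z x ≤ dist z t₀ + dist t₀ x := dist_triangle _ _ _
        _ < 2 * r := by linarith
    have hμ2r : μ (Metric.ball x (2 * r)) ≤ ENNReal.ofReal (c₂ * (2 * r) ^ δ) :=
      hupp x (2 * r) (by linarith) (by linarith)
    -- T is finite
    have hTfin : T.Finite := by
      have hfin := MeasureTheory.Measure.finite_const_le_meas_of_disjoint_iUnion μ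
        (ε := ENNReal.ofReal (c₁ * (ε / 4) ^ δ)) (ENNReal.ofReal_pos.mpr (by positivity))
        (As := fun t₀ : T => Metric.ball (t₀ : X) (ε / 4))
        (fun _ => Metric.isOpen_ball.measurableSet)
        (fun i j hij => hdisj i.2 j.2 fun h => hij (Subtype.ext h))
        (by
          refine ne_top_of_le_ne_top ENNReal.ofReal_ne_top
            (le_trans (measure_mono ?_) hμ2r)
          exact iUnion_subset fun i => hballs_subset i i.2)
      have huniv : {i : T | ENNReal.ofReal (c₁ * (ε / 4) ^ δ) ≤
          μ (Metric.ball (i : X) (ε / 4))} = univ := eq_univ_of_forall fun i => hq i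
      rw [huniv] at hfin
      exact Set.finite_coe_iff.mp (Set.finite_univ_iff.mp hfin)
    set l : List X := hTfin.toFinset.toList with hl
    set L : ℕ := l.length with hL
    -- the covering sets
    set t : ℕ → Set X :=
      fun n => if h : n < l.length then Metric.ball (l.get ⟨n, h⟩) (ε / 2) else ∅ with ht
    have hball_diam : ∀ c : X, EMetric.diam (Metric.ball c (ε / 2)) ≤ ENNReal.ofReal ε := by
      intro c
      refine EMetric.diam_le fun a ha b hb => ?_
      rw [edist_dist]
      refine ENNReal.ofReal_le_ofReal ?_
      have h1 : dist a c < ε / 2 := Metric.mem_ball.mp ha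
      have h2 : dist b c < ε / 2 := Metric.mem_ball.mp hb
      calc dist a b ≤ dist a c + dist c b := dist_triangle _ _ _
        _ ≤ ε := by rw [dist_comm c b]; linarith
    have hcover : Metric.ball x r ⊆ ⋃ n, t n := by
      intro y hy
      obtain ⟨t₀, ht₀T, ht₀⟩ := hcov y hy
      have hmem : t₀ ∈ l := by
        rw [hl, Finset.mem_toList]
        exact hTfin.mem_toFinset.mpr ht₀T
      obtain ⟨i, hi⟩ := List.mem_iff_get.mp hmem
      refine mem_iUnion.mpr ⟨i, ?_⟩
      simp only [ht, i.isLt, dif_pos, Fin.eta, hi]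
      exact Metric.mem_ball.mpr ht₀
    have hdiam : ∀ n, EMetric.diam (t n) ≤ ρ := by
      intro n
      simp only [ht]
      by_cases h : n < l.length
      · rw [dif_pos h]
        exact le_trans (hball_diam _) hερ
      · rw [dif_neg h]
        exact EMetric.diam_le fun a ha _ _ => False.elim ha
    -- counting the elements of T
    have hcount : (L : ℝ≥0∞) * ENNReal.ofReal (c₁ * (ε / 4) ^ δ) ≤
        ENNReal.ofReal (c₂ * (2 * r) ^ δ) := by
      have hcard : L = hTfin.toFinset.card := by rw [hL, hl, Finset.length_toList]
      have h1 : ∑ t₀ ∈ hTfin.toFinset, μ (Metric.ball t₀ (ε / 4)) =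
          μ (⋃ t₀ ∈ hTfin.toFinset, Metric.ball t₀ (ε / 4)) :=
        (measure_biUnion_finset (by rwa [hTfin.coe_toFinset])
          fun _ _ => Metric.isOpen_ball.measurableSet).symm
      calc (L : ℝ≥0∞) * ENNReal.ofReal (c₁ * (ε / 4) ^ δ)
          = ∑ _t₀ ∈ hTfin.toFinset, ENNReal.ofReal (c₁ * (ε / 4) ^ δ) := by
            rw [Finset.sum_const, hcard, nsmul_eq_mul]
        _ ≤ ∑ t₀ ∈ hTfin.toFinset, μ (Metric.ball t₀ (ε / 4)) :=
            Finset.sum_le_sum fun t₀ _ => hq t₀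
        _ = μ (⋃ t₀ ∈ hTfin.toFinset, Metric.ball t₀ (ε / 4)) := h1
        _ ≤ μ (Metric.ball x (2 * r)) := measure_mono
            (iUnion₂_subset fun t₀ ht₀ => hballs_subset t₀ (hTfin.mem_toFinset.mp ht₀))
        _ ≤ ENNReal.ofReal (c₂ * (2 * r) ^ δ) := hμ2r
    -- final estimate
    have hA0 : ENNReal.ofReal (c₁ * (ε / 4) ^ δ) ≠ 0 :=
      (ENNReal.ofReal_pos.mpr (by positivity)).ne'
    have hAtop : ENNReal.ofReal (c₁ * (ε / 4) ^ δ) ≠ ∞ := ENNReal.ofReal_ne_top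
    have hfinal : (L : ℝ≥0∞) * ENNReal.ofReal (ε ^ δ) ≤
        ENNReal.ofReal (c₂ * 8 ^ δ / c₁ * r ^ δ) := by
      rw [← ENNReal.mul_le_mul_iff_left hA0 hAtop]
      calc (L : ℝ≥0∞) * ENNReal.ofReal (ε ^ δ) * ENNReal.ofReal (c₁ * (ε / 4) ^ δ)
          = (L : ℝ≥0∞) * ENNReal.ofReal (c₁ * (ε / 4) ^ δ) * ENNReal.ofReal (ε ^ δ) := by
            ring
        _ ≤ ENNReal.ofReal (c₂ * (2 * r) ^ δ) * ENNReal.ofReal (ε ^ δ) := by gcongr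
        _ = ENNReal.ofReal (c₂ * 8 ^ δ / c₁ * r ^ δ) *
              ENNReal.ofReal (c₁ * (ε / 4) ^ δ) := by
            rw [← ENNReal.ofReal_mul (by positivity), ← ENNReal.ofReal_mul (by positivity)]
            congr 1
            have h8 : (8 : ℝ) ^ δ = 2 ^ δ * 4 ^ δ := by
              rw [← Real.mul_rpow (by norm_num) (by norm_num)]
              norm_num
            rw [Real.mul_rpow (by norm_num) hr.le, Real.div_rpow hε0.le (by norm_num), h8]
            field_simp
    -- put the pieces together
    refine le_trans (iInf_le _ t) (le_trans (iInf_le _ hcover)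
      (le_trans (iInf_le _ hdiam) ?_))
    calc (∑' n, ⨆ _ : (t n).Nonempty, EMetric.diam (t n) ^ δ)
        ≤ ∑' n, (if n < L then ENNReal.ofReal (ε ^ δ) else 0) := by
          refine ENNReal.tsum_le_tsum fun n => ?_
          by_cases h : n < L
          · rw [if_pos h]
            refine iSup_le fun _ => ?_
            simp only [hL] at h
            simp only [ht, dif_pos h]
            calc EMetric.diam (Metric.ball (l.get ⟨n, h⟩) (ε / 2)) ^ δ
                ≤ ENNReal.ofReal ε ^ δ := ENNReal.rpow_le_rpow (hball_diam _) hδ.le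
              _ = ENNReal.ofReal (ε ^ δ) := ENNReal.ofReal_rpow_of_pos hε0
          · rw [if_neg h]
            simp only [hL] at h
            simp only [ht, dif_neg h]
            simp
      _ = (L : ℝ≥0∞) * ENNReal.ofReal (ε ^ δ) := by
          rw [tsum_eq_sum (s := Finset.range L)
            (fun n hn => if_neg (by simpa using hn))]
          rw [Finset.sum_congr rfl fun n hn => if_pos (Finset.mem_range.mp hn)]
          rw [Finset.sum_const, Finset.card_range, nsmul_eq_mul]
      _ ≤ ENNReal.ofReal (c₂ * 8 ^ δ / c₁ * r ^ δ) := hfinal
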